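/- Let ν∈(−1,1/2], κ>0, γ>0 with γ≠1, and β∈ℝ with β≠0, β≠1 and β(1+ν) ≤ 3γ(1−ν). Define ŵ:(0,∞)²→ℝ by ŵ(δ,η)=κ[η^{γ−1}((3(1−ν)/(β(β−1)(1+ν)))(δ/η)^{β−1}+(3(1−ν)/(β(1+ν))−1/γ)(δ/η)^{−1}+1/(γ−1)−3(1−ν)/((β−1)(1+ν)))+δ^{−1}/γ−1/(γ−1)]. Then ŵ(δ,η) ≥ 0 for all η ≥ δ > 0. Moreover ŵ(δ,η) ≥ 0 for all δ,η>0 if and only if β ≥ min(γ, 3γ(1−ν)/(1+ν)−2(1−2ν)/(1+ν)). -/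

import Mathlib

open Real Set Filter Topology

noncomputable section

/-- Auxiliary function: `Gf s x = (x^s - s*x + s - 1)/(s*(s-1))`. -/
def Gf (s x : ℝ) : ℝ := (x ^ s - s * x + s - 1) / (s * (s - 1))

lemma Gf_one (s : ℝ) : Gf s 1 = 0 := by
  simp [Gf]

lemma hasDerivAt_Gf {s x : ℝ} (hs0 : s ≠ 0) (hs1 : s ≠ 1) (hx : 0 < x) :
    HasDerivAt (Gf s) ((x ^ (s - 1) - 1) / (s - 1)) x := by
  have h : HasDerivAt (fun y : ℝ => y ^ s - s * y + s - 1)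
      (s * x ^ (s - 1) - s) x := by
    have h1 := Real.hasDerivAt_rpow_const (x := x) (p := s) (Or.inl hx.ne')
    simpa using ((h1.sub ((hasDerivAt_id x).const_mul s)).add_const s).sub_const 1
  have h2 := h.div_const (s * (s - 1))
  refine h2.congr_deriv (Eq.symm ?_)
  rw [div_eq_div_iff (sub_ne_zero.2 hs1) (mul_ne_zero hs0 (sub_ne_zero.2 hs1))]
  ring

lemma hasDerivAt_Gf' {s x : ℝ} (hs1 : s ≠ 1) (hx : 0 < x) :
    HasDerivAt (fun y : ℝ => (y ^ (s - 1) - 1) / (s - 1)) (x ^ (s - 2)) x := by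
  have h1 := Real.hasDerivAt_rpow_const (x := x) (p := s - 1) (Or.inl hx.ne')
  have h2 := (h1.sub_const 1).div_const (s - 1)
  refine h2.congr_deriv (Eq.symm ?_)
  have h3 : s - 1 - 1 = s - 2 := by ring
  rw [h3, mul_comm, mul_div_assoc, div_self (sub_ne_zero.2 hs1), mul_one]

/-- If `f 1 = 0` and `f' ≤ 0` on `(t,1)`, then `f t ≥ 0`. -/
lemma nonneg_left {f f' : ℝ → ℝ} {t : ℝ} (ht : 0 < t) (ht1 : t ≤ 1)
    (hd : ∀ x ∈ Icc t 1, HasDerivAt f (f' x) x)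
    (h1 : f 1 = 0) (hs : ∀ x ∈ Ioo t 1, f' x ≤ 0) : 0 ≤ f t := by
  have hanti : AntitoneOn f (Icc t 1) := by
    apply antitoneOn_of_deriv_nonpos (convex_Icc t 1)
    · exact fun x hx => (hd x hx).continuousAt.continuousWithinAt
    · intro x hx
      rw [interior_Icc] at hx
      exact ((hd x (Ioo_subset_Icc_self hx)).differentiableAt).differentiableWithinAt
    · intro x hx
      rw [interior_Icc] at hx
      rw [(hd x (Ioo_subset_Icc_self hx)).deriv]
      exact hs x hx
  have := hanti (left_mem_Icc.2 ht1) (right_mem_Icc.2 ht1) ht1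
  rw [h1] at this
  exact this

/-- If `f 1 = 0` and `f' ≥ 0` on `(t,1)`, then `f t ≤ 0`. -/
lemma nonpos_left {f f' : ℝ → ℝ} {t : ℝ} (ht : 0 < t) (ht1 : t ≤ 1)
    (hd : ∀ x ∈ Icc t 1, HasDerivAt f (f' x) x)
    (h1 : f 1 = 0) (hs : ∀ x ∈ Ioo t 1, 0 ≤ f' x) : f t ≤ 0 := by
  have hmono : MonotoneOn f (Icc t 1) := by
    apply monotoneOn_of_deriv_nonneg (convex_Icc t 1)
    · exact fun x hx => (hd x hx).continuousAt.continuousWithinAt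
    · intro x hx
      rw [interior_Icc] at hx
      exact ((hd x (Ioo_subset_Icc_self hx)).differentiableAt).differentiableWithinAt
    · intro x hx
      rw [interior_Icc] at hx
      rw [(hd x (Ioo_subset_Icc_self hx)).deriv]
      exact hs x hx
  have := hmono (left_mem_Icc.2 ht1) (right_mem_Icc.2 ht1) ht1
  rw [h1] at this
  exact this

/-- If `f 1 = 0` and `f' ≥ 0` on `(1,t)`, then `f t ≥ 0`. -/
lemma nonneg_right {f f' : ℝ → ℝ} {t : ℝ} (ht1 : 1 ≤ t)
    (hd : ∀ x ∈ Icc 1 t, HasDerivAt f (f' x) x)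
    (h1 : f 1 = 0) (hs : ∀ x ∈ Ioo 1 t, 0 ≤ f' x) : 0 ≤ f t := by
  have hmono : MonotoneOn f (Icc 1 t) := by
    apply monotoneOn_of_deriv_nonneg (convex_Icc 1 t)
    · exact fun x hx => (hd x hx).continuousAt.continuousWithinAt
    · intro x hx
      rw [interior_Icc] at hx
      exact ((hd x (Ioo_subset_Icc_self hx)).differentiableAt).differentiableWithinAt
    · intro x hx
      rw [interior_Icc] at hx
      rw [(hd x (Ioo_subset_Icc_self hx)).deriv]
      exact hs x hx
  have := hmono (left_mem_Icc.2 ht1) (right_mem_Icc.2 ht1) ht1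
  rw [h1] at this
  exact this

/-- First derivative sign of `Gf`: nonpositive left of `1`. -/
lemma Gf_deriv_nonpos {s x : ℝ} (hs1 : s ≠ 1) (hx : 0 < x) (hx1 : x ≤ 1) :
    (x ^ (s - 1) - 1) / (s - 1) ≤ 0 := by
  rcases lt_or_gt_of_ne hs1 with h | h
  · apply div_nonpos_of_nonneg_of_nonpos
    · have : (1:ℝ) ≤ x ^ (s - 1) :=
        Real.one_le_rpow_of_pos_of_le_one_of_nonpos hx hx1 (by linarith)
      linarith
    · linarith
  · apply div_nonpos_of_nonpos_of_nonneg
    · have : x ^ (s - 1) ≤ 1 := Real.rpow_le_one hx.le hx1 (by linarith)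
      linarith
    · linarith

/-- First derivative sign of `Gf`: nonnegative right of `1`. -/
lemma Gf_deriv_nonneg {s x : ℝ} (hs1 : s ≠ 1) (hx1 : 1 ≤ x) :
    0 ≤ (x ^ (s - 1) - 1) / (s - 1) := by
  rcases lt_or_gt_of_ne hs1 with h | h
  · refine div_nonneg_iff.2 (Or.inr ⟨?_, by linarith⟩)
    have : x ^ (s - 1) ≤ 1 := Real.rpow_le_one_of_one_le_of_nonpos hx1 (by linarith)
    linarith
  · apply div_nonneg
    · have : (1:ℝ) ≤ x ^ (s - 1) := Real.one_le_rpow hx1 (by linarith)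
      linarith
    · linarith

/-- `Gf s x ≥ 0` for `x > 0`, `s ≠ 0, 1`. -/
lemma Gf_nonneg {s x : ℝ} (hs0 : s ≠ 0) (hs1 : s ≠ 1) (hx : 0 < x) : 0 ≤ Gf s x := by
  rcases le_or_gt x 1 with h | h
  · refine nonneg_left hx h (fun y hy => hasDerivAt_Gf hs0 hs1 (lt_of_lt_of_le hx hy.1))
      (Gf_one s) (fun y hy => Gf_deriv_nonpos hs1 (lt_of_lt_of_le hx hy.1.le) hy.2.le)
  · exact nonneg_right h.le
      (fun y hy => hasDerivAt_Gf hs0 hs1 (lt_of_lt_of_le one_pos hy.1))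
      (Gf_one s) (fun y hy => Gf_deriv_nonneg hs1 hy.1.le)
/-- `Hf a β γ t = a * Gf β t - Gf γ t`. -/
def Hf (a β γ t : ℝ) : ℝ := a * Gf β t - Gf γ t

/-- Derivative of `Hf`. -/
def H1 (a β γ t : ℝ) : ℝ := a * ((t ^ (β - 1) - 1) / (β - 1)) - (t ^ (γ - 1) - 1) / (γ - 1)

lemma Hf_one (a β γ : ℝ) : Hf a β γ 1 = 0 := by simp [Hf, Gf_one]

lemma H1_one (a β γ : ℝ) : H1 a β γ 1 = 0 := by simp [H1]

lemma hasDerivAt_Hf {a β γ t : ℝ} (hβ0 : β ≠ 0) (hβ1 : β ≠ 1) (hγ0 : γ ≠ 0) (hγ1 : γ ≠ 1)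
    (ht : 0 < t) : HasDerivAt (Hf a β γ) (H1 a β γ t) t :=
  ((hasDerivAt_Gf hβ0 hβ1 ht).const_mul a).sub (hasDerivAt_Gf hγ0 hγ1 ht)

lemma hasDerivAt_H1 {a β γ t : ℝ} (hβ1 : β ≠ 1) (hγ1 : γ ≠ 1) (ht : 0 < t) :
    HasDerivAt (H1 a β γ) (a * t ^ (β - 2) - t ^ (γ - 2)) t :=
  ((hasDerivAt_Gf' hβ1 ht).const_mul a).sub (hasDerivAt_Gf' hγ1 ht)

lemma H2_eq {a β γ t : ℝ} (ht : 0 < t) :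
    a * t ^ (β - 2) - t ^ (γ - 2) = t ^ (β - 2) * (a - t ^ (γ - β)) := by
  rw [show γ - 2 = (γ - β) + (β - 2) by ring, Real.rpow_add ht]
  ring

lemma H2_nonneg {a β γ t : ℝ} (ht : 0 < t) (h : t ^ (γ - β) ≤ a) :
    0 ≤ a * t ^ (β - 2) - t ^ (γ - 2) := by
  rw [H2_eq ht]
  exact mul_nonneg (Real.rpow_pos_of_pos ht _).le (by linarith)

lemma H2_nonpos {a β γ t : ℝ} (ht : 0 < t) (h : a ≤ t ^ (γ - β)) :
    a * t ^ (β - 2) - t ^ (γ - 2) ≤ 0 := by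
  rw [H2_eq ht]
  exact mul_nonpos_of_nonneg_of_nonpos (Real.rpow_pos_of_pos ht _).le (by linarith)

lemma Hf_expand {a β γ : ℝ} (hβ0 : β ≠ 0) (hβ1 : β ≠ 1) (hγ0 : γ ≠ 0) (hγ1 : γ ≠ 1) (t : ℝ) :
    Hf a β γ t = a / (β * (β - 1)) * t ^ β - 1 / (γ * (γ - 1)) * t ^ γ
      + (1 / (γ - 1) - a / (β - 1)) * t + (a / β - 1 / γ) := by
  have hb : β - 1 ≠ 0 := sub_ne_zero.2 hβ1
  have hg : γ - 1 ≠ 0 := sub_ne_zero.2 hγ1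
  unfold Hf Gf
  field_simp
  ring

lemma tendsto_Hf_zero {a β γ : ℝ} (hβ0 : β ≠ 0) (hβ1 : β ≠ 1) (hγ0 : γ ≠ 0) (hγ1 : γ ≠ 1)
    (hβp : 0 < β) (hγp : 0 < γ) :
    Tendsto (Hf a β γ) (𝓝[>] (0:ℝ)) (𝓝 (a / β - 1 / γ)) := by
  have hrp : ∀ p : ℝ, 0 < p → Tendsto (fun t : ℝ => t ^ p) (𝓝[>] (0:ℝ)) (𝓝 0) := by
    intro p hp
    have := (Real.continuousAt_rpow_const 0 p (Or.inr hp.le)).tendsto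
    rw [Real.zero_rpow hp.ne'] at this
    exact this.mono_left nhdsWithin_le_nhds
  have hb := hrp β hβp
  have hg := hrp γ hγp
  have hid : Tendsto (fun t : ℝ => t) (𝓝[>] (0:ℝ)) (𝓝 0) :=
    tendsto_id.mono_left nhdsWithin_le_nhds
  have h := (((hb.const_mul (a / (β * (β - 1)))).sub
      (hg.const_mul (1 / (γ * (γ - 1))))).add
      (hid.const_mul (1 / (γ - 1) - a / (β - 1)))).add_const (a / β - 1 / γ)
  simp only [mul_zero, sub_zero, add_zero, zero_add] at h
  exact h.congr (fun t => (Hf_expand hβ0 hβ1 hγ0 hγ1 t).symm)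

lemma tendsto_Hf_div_atTop {a β γ : ℝ} (hβ0 : β ≠ 0) (hβ1 : β < 1) (hγ0 : γ ≠ 0) (hγ1 : γ < 1) :
    Tendsto (fun t => Hf a β γ t / t) atTop (𝓝 (1 / (γ - 1) - a / (β - 1))) := by
  have hrp : ∀ p : ℝ, p < 0 → Tendsto (fun t : ℝ => t ^ p) atTop (𝓝 0) := by
    intro p hp
    have := tendsto_rpow_neg_atTop (neg_pos.2 hp)
    simpa using this
  have hb := hrp (β - 1) (by linarith)
  have hg := hrp (γ - 1) (by linarith)
  have hinv : Tendsto (fun t : ℝ => t⁻¹) atTop (𝓝 0) := tendsto_inv_atTop_zero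
  have h := ((((hb.const_mul (a / (β * (β - 1)))).sub
      (hg.const_mul (1 / (γ * (γ - 1))))).add_const
      (1 / (γ - 1) - a / (β - 1))).add
      (hinv.const_mul (a / β - 1 / γ)))
  simp only [mul_zero, sub_zero, add_zero, zero_add] at h
  apply h.congr'
  filter_upwards [eventually_gt_atTop (0:ℝ)] with t ht
  rw [Hf_expand hβ0 (by linarith) hγ0 (by linarith) t]
  rw [Real.rpow_sub ht, Real.rpow_sub ht, Real.rpow_one]
  have hb1 : β - 1 ≠ 0 := sub_ne_zero.2 (ne_of_lt hβ1)
  have hg1 : γ - 1 ≠ 0 := sub_ne_zero.2 (ne_of_lt hγ1)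
  field_simp

lemma tendsto_Hf_div_rpow_atTop {a β γ : ℝ} (hβ0 : β ≠ 0) (hβ1 : β ≠ 1) (hγ0 : γ ≠ 0)
    (hβγ : β < γ) (hγ1 : 1 < γ) :
    Tendsto (fun t => Hf a β γ t / t ^ γ) atTop (𝓝 (-(1 / (γ * (γ - 1))))) := by
  have hrp : ∀ p : ℝ, p < 0 → Tendsto (fun t : ℝ => t ^ p) atTop (𝓝 0) := by
    intro p hp
    have := tendsto_rpow_neg_atTop (neg_pos.2 hp)
    simpa using this
  have hb := hrp (β - γ) (by linarith)
  have h1 := hrp (1 - γ) (by linarith)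
  have h2 := hrp (-γ) (by linarith)
  have h := (((hb.const_mul (a / (β * (β - 1)))).add_const
      (-(1 / (γ * (γ - 1))))).add
      (h1.const_mul (1 / (γ - 1) - a / (β - 1)))).add
      (h2.const_mul (a / β - 1 / γ))
  simp only [mul_zero, sub_zero, add_zero, zero_add] at h
  apply h.congr'
  filter_upwards [eventually_gt_atTop (0:ℝ)] with t ht
  have htγ : (0:ℝ) < t ^ γ := Real.rpow_pos_of_pos ht γ
  rw [Hf_expand hβ0 hβ1 hγ0 (by linarith) t]
  rw [Real.rpow_sub ht, Real.rpow_sub ht, Real.rpow_one,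
    show -γ = 0 - γ by ring, Real.rpow_sub ht, Real.rpow_zero]
  have hb1 : β - 1 ≠ 0 := sub_ne_zero.2 hβ1
  have hg1 : γ - 1 ≠ 0 := sub_ne_zero.2 (ne_of_gt hγ1)
  field_simp
  ring
/-- A function concave on `(0,c]`, nonnegative at `c`, with nonnegative limit at `0⁺`,
is nonnegative on `(0,c]`. -/
lemma concave_nonneg_left {f : ℝ → ℝ} {c L : ℝ} (hc : 0 < c)
    (hconc : ConcaveOn ℝ (Ioc 0 c) f) (hfc : 0 ≤ f c) (hL : 0 ≤ L)
    (hlim : Tendsto f (𝓝[>] (0:ℝ)) (𝓝 L)) {t : ℝ} (ht : 0 < t) (htc : t ≤ c) : 0 ≤ f t := by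
  rcases eq_or_lt_of_le htc with rfl | htc'
  · exact hfc
  have hkey : ∀ᶠ w in 𝓝[>] (0:ℝ), (c - t)/(c - w) * f w + (t - w)/(c - w) * f c ≤ f t := by
    filter_upwards [Ioo_mem_nhdsGT_of_mem (show (0:ℝ) ∈ Ico 0 t from ⟨le_refl 0, ht⟩)] with w hw
    have hwc : w < c := hw.2.trans htc'
    have hcw : 0 < c - w := by linarith
    have h1 : (0:ℝ) ≤ (c - t)/(c - w) := div_nonneg (by linarith) hcw.le
    have h2 : (0:ℝ) ≤ (t - w)/(c - w) := div_nonneg (by linarith [hw.2]) hcw.le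
    have h3 : (c - t)/(c - w) + (t - w)/(c - w) = 1 := by field_simp; ring
    have h4 := hconc.2 (show w ∈ Ioc 0 c from ⟨hw.1, hwc.le⟩)
        (show c ∈ Ioc 0 c from ⟨hc, le_refl c⟩) h1 h2 h3
    have h5 : ((c - t)/(c - w)) • w + ((t - w)/(c - w)) • c = t := by
      simp only [smul_eq_mul]
      field_simp
      ring
    rw [h5] at h4
    simpa using h4
  have hg : Tendsto (fun w => (c - t)/(c - w) * f w + (t - w)/(c - w) * f c)
      (𝓝[>] (0:ℝ)) (𝓝 ((c - t)/c * L + t/c * f c)) := by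
    have hw0 : Tendsto (fun w : ℝ => w) (𝓝[>] (0:ℝ)) (𝓝 0) :=
      tendsto_id.mono_left nhdsWithin_le_nhds
    have hc0 : Tendsto (fun w : ℝ => c - w) (𝓝[>] (0:ℝ)) (𝓝 c) := by
      simpa using tendsto_const_nhds.sub hw0
    have hA : Tendsto (fun w : ℝ => (c - t)/(c - w)) (𝓝[>] (0:ℝ)) (𝓝 ((c - t)/c)) :=
      tendsto_const_nhds.div hc0 hc.ne'
    have hB : Tendsto (fun w : ℝ => (t - w)/(c - w)) (𝓝[>] (0:ℝ)) (𝓝 (t/c)) := by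
      have ht' : Tendsto (fun w : ℝ => t - w) (𝓝[>] (0:ℝ)) (𝓝 t) := by
        simpa using tendsto_const_nhds.sub hw0
      exact ht'.div hc0 hc.ne'
    exact (hA.mul hlim).add (hB.mul tendsto_const_nhds)
  have hpos : 0 ≤ (c - t)/c * L + t/c * f c :=
    add_nonneg (mul_nonneg (div_nonneg (by linarith) hc.le) hL)
      (mul_nonneg (div_nonneg ht.le hc.le) hfc)
  exact hpos.trans (le_of_tendsto hg hkey)

/-- A function concave on `[c,∞)`, nonnegative at `c`, with `f w / w` tending to a
nonnegative limit at `∞`, is nonnegative on `[c,∞)`. -/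
lemma concave_nonneg_right {f : ℝ → ℝ} {c L : ℝ}
    (hconc : ConcaveOn ℝ (Ici c) f) (hfc : 0 ≤ f c) (hL : 0 ≤ L)
    (hlim : Tendsto (fun w => f w / w) atTop (𝓝 L)) {t : ℝ} (hct : c ≤ t) : 0 ≤ f t := by
  rcases eq_or_lt_of_le hct with rfl | hct'
  · exact hfc
  have hinv : Tendsto (fun w : ℝ => (w - c)⁻¹) atTop (𝓝 0) :=
    (tendsto_atTop_add_const_right _ (-c) tendsto_id).inv_tendsto_atTop
  have hkey : ∀ᶠ w in atTop, (w - t)/(w - c) * f c + (t - c)/(w - c) * f w ≤ f t := by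
    filter_upwards [eventually_gt_atTop t] with w hw
    have hcw : 0 < w - c := by linarith
    have h1 : (0:ℝ) ≤ (w - t)/(w - c) := div_nonneg (by linarith) hcw.le
    have h2 : (0:ℝ) ≤ (t - c)/(w - c) := div_nonneg (by linarith) hcw.le
    have h3 : (w - t)/(w - c) + (t - c)/(w - c) = 1 := by field_simp; ring
    have h4 := hconc.2 (show c ∈ Ici c from le_refl c)
        (show w ∈ Ici c from le_of_lt (lt_trans hct' hw)) h1 h2 h3
    have h5 : ((w - t)/(w - c)) • c + ((t - c)/(w - c)) • w = t := by
      simp only [smul_eq_mul]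
      field_simp
      ring
    rw [h5] at h4
    simpa using h4
  have hA : Tendsto (fun w : ℝ => (w - t)/(w - c)) atTop (𝓝 1) := by
    have h' : Tendsto (fun w : ℝ => 1 - (t - c) * (w - c)⁻¹) atTop (𝓝 1) := by
      simpa using tendsto_const_nhds.sub (hinv.const_mul (t - c))
    apply h'.congr'
    filter_upwards [eventually_gt_atTop c] with w hw
    have hwc : w - c ≠ 0 := sub_ne_zero.2 (ne_of_gt hw)
    field_simp
    ring
  have hB : Tendsto (fun w : ℝ => (t - c)/(w - c) * f w) atTop (𝓝 ((t - c) * L)) := by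
    have hC : Tendsto (fun w : ℝ => w / (w - c)) atTop (𝓝 1) := by
      have h' : Tendsto (fun w : ℝ => 1 + c * (w - c)⁻¹) atTop (𝓝 1) := by
        simpa using tendsto_const_nhds.add (hinv.const_mul c)
      apply h'.congr'
      filter_upwards [eventually_gt_atTop c] with w hw
      have hwc : w - c ≠ 0 := sub_ne_zero.2 (ne_of_gt hw)
      field_simp
      ring
    have h2 := ((hlim.const_mul (t - c)).mul hC)
    rw [mul_one] at h2
    apply h2.congr'
    filter_upwards [eventually_gt_atTop (max c 0)] with w hw
    have hw0 : w ≠ 0 := by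
      have := lt_of_le_of_lt (le_max_right c 0) hw; linarith
    have hwc : w - c ≠ 0 := by
      have := lt_of_le_of_lt (le_max_left c 0) hw
      exact sub_ne_zero.2 (ne_of_gt this)
    field_simp
  have hg : Tendsto (fun w => (w - t)/(w - c) * f c + (t - c)/(w - c) * f w) atTop
      (𝓝 (1 * f c + (t - c) * L)) := (hA.mul tendsto_const_nhds).add hB
  have hpos : 0 ≤ 1 * f c + (t - c) * L := by
    have := mul_nonneg (by linarith : (0:ℝ) ≤ t - c) hL
    linarith
  exact hpos.trans (le_of_tendsto hg hkey)
/-- Key inequality, left side: `Hf a β γ t ≥ 0` for `0 < t ≤ 1` given `β ≤ a γ`. -/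
lemma Hf_nonneg_le_one {a β γ t : ℝ} (ha : 1 ≤ a) (hβ0 : β ≠ 0) (hβ1 : β ≠ 1)
    (hγ0 : 0 < γ) (hγ1 : γ ≠ 1) (hβa : β ≤ a * γ) (ht : 0 < t) (ht1 : t ≤ 1) :
    0 ≤ Hf a β γ t := by
  have ha0 : (0:ℝ) < a := lt_of_lt_of_le one_pos ha
  have hγ0' : γ ≠ 0 := hγ0.ne'
  have hH1 : ∀ x : ℝ, 0 < x → x ≤ 1 → (∀ u, x ≤ u → u ≤ 1 → u ^ (γ - β) ≤ a) →
      H1 a β γ x ≤ 0 := by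
    intro x hx hx1 hcond
    exact nonpos_left hx hx1 (fun u hu => hasDerivAt_H1 hβ1 hγ1 (lt_of_lt_of_le hx hu.1))
      (H1_one a β γ) (fun u hu => H2_nonneg (lt_of_lt_of_le hx hu.1.le)
        (hcond u hu.1.le hu.2.le))
  have hHf : ∀ x : ℝ, 0 < x → x ≤ 1 → (∀ u, x ≤ u → u ≤ 1 → u ^ (γ - β) ≤ a) →
      0 ≤ Hf a β γ x := by
    intro x hx hx1 hcond
    exact nonneg_left hx hx1 (fun u hu => hasDerivAt_Hf hβ0 hβ1 hγ0' hγ1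
        (lt_of_lt_of_le hx hu.1)) (Hf_one a β γ)
      (fun u hu => hH1 u (lt_trans hx hu.1) hu.2.le
        (fun v hv hv1 => hcond v (le_trans hu.1.le hv) hv1))
  rcases le_or_gt β γ with hbg | hgb
  · refine hHf t ht ht1 (fun u hu hu1 => ?_)
    exact le_trans (Real.rpow_le_one (lt_of_lt_of_le ht hu).le hu1 (by linarith)) ha
  · set c := a ^ (-(β - γ)⁻¹) with hc_def
    have hc_pos : 0 < c := Real.rpow_pos_of_pos ha0 _
    have hc1 : c ≤ 1 := Real.rpow_le_one_of_one_le_of_nonpos ha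
      (by rw [neg_nonpos]; exact (inv_nonneg).2 (by linarith))
    have hceq : c ^ (γ - β) = a := by
      rw [hc_def, ← Real.rpow_mul ha0.le,
        show -(β - γ)⁻¹ * (γ - β) = 1 by
          field_simp [sub_ne_zero.2 (ne_of_gt hgb)]; ring,
        Real.rpow_one]
    have hup : ∀ u : ℝ, c ≤ u → u ≤ 1 → u ^ (γ - β) ≤ a := by
      intro u hcu _
      calc u ^ (γ - β) ≤ c ^ (γ - β) :=
            Real.rpow_le_rpow_of_nonpos hc_pos hcu (by linarith)
        _ = a := hceq
    have hfc : 0 ≤ Hf a β γ c := hHf c hc_pos hc1 hup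
    rcases le_or_gt c t with hct | htc
    · exact hHf t ht ht1 (fun u hu hu1 => hup u (le_trans hct hu) hu1)
    · have hβp : 0 < β := lt_trans hγ0 hgb
      have hconc : ConcaveOn ℝ (Ioc 0 c) (Hf a β γ) := by
        apply AntitoneOn.concaveOn_of_deriv (convex_Ioc 0 c)
        · exact fun x hx =>
            (hasDerivAt_Hf hβ0 hβ1 hγ0' hγ1 hx.1).continuousAt.continuousWithinAt
        · intro x hx
          rw [interior_Ioc] at hx
          exact (hasDerivAt_Hf hβ0 hβ1 hγ0' hγ1 hx.1).differentiableAt.differentiableWithinAt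
        · rw [interior_Ioc]
          have hanti : AntitoneOn (H1 a β γ) (Ioo 0 c) := by
            apply antitoneOn_of_deriv_nonpos (convex_Ioo 0 c)
            · exact fun x hx =>
                (hasDerivAt_H1 hβ1 hγ1 hx.1).continuousAt.continuousWithinAt
            · intro x hx
              rw [interior_Ioo] at hx
              exact (hasDerivAt_H1 hβ1 hγ1 hx.1).differentiableAt.differentiableWithinAt
            · intro x hx
              rw [interior_Ioo] at hx
              rw [(hasDerivAt_H1 hβ1 hγ1 hx.1).deriv]
              apply H2_nonpos hx.1
              calc a = c ^ (γ - β) := hceq.symm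
                _ ≤ x ^ (γ - β) :=
                  Real.rpow_le_rpow_of_nonpos hx.1 hx.2.le (by linarith)
          intro x hx y hy hxy
          rw [(hasDerivAt_Hf hβ0 hβ1 hγ0' hγ1 hx.1).deriv,
            (hasDerivAt_Hf hβ0 hβ1 hγ0' hγ1 hy.1).deriv]
          exact hanti hx hy hxy
      have hL : 0 ≤ a / β - 1 / γ := by
        rw [sub_nonneg, div_le_div_iff₀ hγ0 hβp]
        linarith
      exact concave_nonneg_left hc_pos hconc hfc hL
        (tendsto_Hf_zero hβ0 hβ1 hγ0' hγ1 hβp hγ0) ht htc.le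

/-- Key inequality, right side: `Hf a β γ t ≥ 0` for `t ≥ 1` given
`β ≥ min γ (a(γ-1)+1)`. -/
lemma Hf_nonneg_ge_one {a β γ t : ℝ} (ha : 1 ≤ a) (hβ0 : β ≠ 0) (hβ1 : β ≠ 1)
    (hγ0 : 0 < γ) (hγ1 : γ ≠ 1) (hmin : min γ (a * (γ - 1) + 1) ≤ β) (ht : 1 ≤ t) :
    0 ≤ Hf a β γ t := by
  have ha0 : (0:ℝ) < a := lt_of_lt_of_le one_pos ha
  have hγ0' : γ ≠ 0 := hγ0.ne'
  have hH1 : ∀ x : ℝ, 1 ≤ x → (∀ u, 1 ≤ u → u ≤ x → u ^ (γ - β) ≤ a) →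
      0 ≤ H1 a β γ x := by
    intro x hx1 hcond
    exact nonneg_right hx1 (fun u hu => hasDerivAt_H1 hβ1 hγ1 (lt_of_lt_of_le one_pos hu.1))
      (H1_one a β γ) (fun u hu => H2_nonneg (lt_of_lt_of_le one_pos hu.1.le)
        (hcond u hu.1.le hu.2.le))
  have hHf : ∀ x : ℝ, 1 ≤ x → (∀ u, 1 ≤ u → u ≤ x → u ^ (γ - β) ≤ a) →
      0 ≤ Hf a β γ x := by
    intro x hx1 hcond
    exact nonneg_right hx1 (fun u hu => hasDerivAt_Hf hβ0 hβ1 hγ0' hγ1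
        (lt_of_lt_of_le one_pos hu.1)) (Hf_one a β γ)
      (fun u hu => hH1 u hu.1.le (fun v hv hvx => hcond v hv (le_trans hvx hu.2.le)))
  rcases le_or_gt γ β with hgb | hbg
  · refine hHf t ht (fun u hu _ => ?_)
    exact le_trans (Real.rpow_le_one_of_one_le_of_nonpos hu (by linarith)) ha
  · have hab : a * (γ - 1) + 1 ≤ β := by
      rcases min_le_iff.mp hmin with h | h
      · linarith
      · exact h
    have hγ1' : γ < 1 := by
      by_contra hh
      push_neg at hh
      nlinarith [mul_nonneg (sub_nonneg.2 ha) (sub_nonneg.2 hh)]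
    have hβ1' : β < 1 := lt_trans hbg hγ1'
    set c := a ^ ((γ - β)⁻¹) with hc_def
    have hc1 : 1 ≤ c := Real.one_le_rpow ha ((inv_nonneg).2 (by linarith))
    have hc_pos : 0 < c := lt_of_lt_of_le one_pos hc1
    have hceq : c ^ (γ - β) = a := by
      rw [hc_def, ← Real.rpow_mul ha0.le,
        inv_mul_cancel₀ (sub_ne_zero.2 (ne_of_gt hbg)),
        Real.rpow_one]
    have hup : ∀ u : ℝ, 1 ≤ u → u ≤ c → u ^ (γ - β) ≤ a := by
      intro u hu huc
      calc u ^ (γ - β) ≤ c ^ (γ - β) :=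
            Real.rpow_le_rpow (by linarith) huc (by linarith)
        _ = a := hceq
    have hfc : 0 ≤ Hf a β γ c := hHf c hc1 hup
    rcases le_or_gt t c with htc | hct
    · exact hHf t ht (fun u hu hut => hup u hu (le_trans hut htc))
    · have hconc : ConcaveOn ℝ (Ici c) (Hf a β γ) := by
        apply AntitoneOn.concaveOn_of_deriv (convex_Ici c)
        · exact fun x hx =>
            (hasDerivAt_Hf hβ0 hβ1 hγ0' hγ1
              (lt_of_lt_of_le hc_pos hx)).continuousAt.continuousWithinAt
        · intro x hx
          rw [interior_Ici] at hx
          exact (hasDerivAt_Hf hβ0 hβ1 hγ0' hγ1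
            (lt_of_lt_of_le hc_pos hx.le)).differentiableAt.differentiableWithinAt
        · rw [interior_Ici]
          have hanti : AntitoneOn (H1 a β γ) (Ioi c) := by
            apply antitoneOn_of_deriv_nonpos (convex_Ioi c)
            · exact fun x hx =>
                (hasDerivAt_H1 hβ1 hγ1 (lt_of_lt_of_le hc_pos (le_of_lt hx))).continuousAt.continuousWithinAt
            · intro x hx
              rw [interior_Ioi] at hx
              exact (hasDerivAt_H1 hβ1 hγ1
                (lt_of_lt_of_le hc_pos hx.le)).differentiableAt.differentiableWithinAt
            · intro x hx
              rw [interior_Ioi] at hx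
              rw [(hasDerivAt_H1 hβ1 hγ1 (lt_of_lt_of_le hc_pos hx.le)).deriv]
              apply H2_nonpos (lt_of_lt_of_le hc_pos hx.le)
              calc a = c ^ (γ - β) := hceq.symm
                _ ≤ x ^ (γ - β) := Real.rpow_le_rpow hc_pos.le hx.le (by linarith)
          intro x hx y hy hxy
          rw [(hasDerivAt_Hf hβ0 hβ1 hγ0' hγ1 (lt_of_lt_of_le hc_pos hx.le)).deriv,
            (hasDerivAt_Hf hβ0 hβ1 hγ0' hγ1 (lt_of_lt_of_le hc_pos hy.le)).deriv]
          exact hanti hx hy hxy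
      have hL : 0 ≤ 1 / (γ - 1) - a / (β - 1) := by
        have hgne : γ - 1 ≠ 0 := sub_ne_zero.2 (ne_of_lt hγ1')
        have hbne : β - 1 ≠ 0 := sub_ne_zero.2 (ne_of_lt hβ1')
        have hb' : (1:ℝ) - β ≠ 0 := sub_ne_zero.2 (ne_of_gt (show (1:ℝ) > β from hβ1'))
        have hg' : (1:ℝ) - γ ≠ 0 := sub_ne_zero.2 (ne_of_gt (show (1:ℝ) > γ from hγ1'))
        have heq : 1 / (γ - 1) - a / (β - 1)
            = (a * (1 - γ) - (1 - β)) / ((1 - β) * (1 - γ)) := by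
          rw [div_sub_div _ _ hgne hbne,
            div_eq_div_iff (mul_ne_zero hgne hbne) (mul_ne_zero hb' hg')]
          ring
        rw [heq]
        apply div_nonneg (by nlinarith) (by nlinarith)
      exact concave_nonneg_right hconc hfc hL
        (tendsto_Hf_div_atTop hβ0 hβ1' hγ0' hγ1') hct.le

/-- If `β < min γ (a(γ-1)+1)` then `Hf` takes a negative value. -/
lemma Hf_exists_neg {a β γ : ℝ} (ha : 1 ≤ a) (hβ0 : β ≠ 0) (hβ1 : β ≠ 1)
    (hγ0 : 0 < γ) (hγ1 : γ ≠ 1) (hlt : β < min γ (a * (γ - 1) + 1)) :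
    ∃ t : ℝ, 0 < t ∧ Hf a β γ t < 0 := by
  have hγ0' : γ ≠ 0 := hγ0.ne'
  have hβγ : β < γ := lt_of_lt_of_le hlt (min_le_left _ _)
  rcases lt_or_gt_of_ne hγ1 with hγlt | hγgt
  · have hβ1' : β < 1 := lt_trans hβγ hγlt
    have hb := lt_of_lt_of_le hlt (min_le_right _ _)
    have hC3 : 1 / (γ - 1) - a / (β - 1) < 0 := by
      have hgne : γ - 1 ≠ 0 := sub_ne_zero.2 (ne_of_lt hγlt)
      have hbne : β - 1 ≠ 0 := sub_ne_zero.2 (ne_of_lt hβ1')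
      have hb' : (1:ℝ) - β ≠ 0 := sub_ne_zero.2 (ne_of_gt (show (1:ℝ) > β from hβ1'))
      have hg' : (1:ℝ) - γ ≠ 0 := sub_ne_zero.2 (ne_of_gt (show (1:ℝ) > γ from hγlt))
      have heq : 1 / (γ - 1) - a / (β - 1)
          = (a * (1 - γ) - (1 - β)) / ((1 - β) * (1 - γ)) := by
        rw [div_sub_div _ _ hgne hbne,
          div_eq_div_iff (mul_ne_zero hgne hbne) (mul_ne_zero hb' hg')]
        ring
      rw [heq]
      apply div_neg_of_neg_of_pos (by nlinarith) (by nlinarith)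
    have h := tendsto_Hf_div_atTop (a := a) hβ0 hβ1' hγ0' hγlt
    have hev := h.eventually_lt_const hC3
    obtain ⟨t, ht0, htneg⟩ := ((eventually_gt_atTop (0:ℝ)).and hev).exists
    refine ⟨t, ht0, ?_⟩
    rcases div_neg_iff.mp htneg with ⟨_, h2⟩ | ⟨h1, _⟩
    · linarith
    · exact h1
  · have hC : -(1 / (γ * (γ - 1))) < 0 := by
      have h0 : 0 < 1 / (γ * (γ - 1)) := one_div_pos.2 (mul_pos hγ0 (by linarith))
      linarith
    have h := tendsto_Hf_div_rpow_atTop (a := a) hβ0 hβ1 hγ0' hβγ hγgt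
    have hev := h.eventually_lt_const hC
    obtain ⟨t, ht0, htneg⟩ := ((eventually_gt_atTop (0:ℝ)).and hev).exists
    refine ⟨t, ht0, ?_⟩
    rcases div_neg_iff.mp htneg with ⟨_, h2⟩ | ⟨h1, _⟩
    · exact absurd h2 (not_lt.2 (Real.rpow_pos_of_pos ht0 γ).le)
    · exact h1
/-- The stored energy function of the polytropic elastic constitutive function with
bulk modulus `κ`, Poisson ratio `ν`, polytropic exponent `γ ≠ 1` and shear exponent
`β ≠ 0, 1`. -/
def wPoly (κ ν γ β δ η : ℝ) : ℝ :=
  κ * (η ^ (γ - 1) *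
      (3 * (1 - ν) / (β * (β - 1) * (1 + ν)) * (δ / η) ^ (β - 1)
        + (3 * (1 - ν) / (β * (1 + ν)) - 1 / γ) * (δ / η)⁻¹
        + 1 / (γ - 1) - 3 * (1 - ν) / ((β - 1) * (1 + ν)))
    + δ⁻¹ / γ - 1 / (γ - 1))

lemma testid (κ β γ ν δ η P Q R : ℝ) (hβ0 : β ≠ 0) (hβne : β - 1 ≠ 0) (hγ0 : γ ≠ 0)
    (hγne : γ - 1 ≠ 0) (hδ0 : δ ≠ 0) (hη0 : η ≠ 0) (hν0' : (1:ℝ) + ν ≠ 0) :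
    κ * ((R * η⁻¹) *
      (3 * (1 - ν) / (β * (β - 1) * (1 + ν)) * (P * (η / δ))
        + (3 * (1 - ν) / (β * (1 + ν)) - 1 / γ) * (δ / η)⁻¹
        + 1 / (γ - 1) - 3 * (1 - ν) / ((β - 1) * (1 + ν)))
    + δ⁻¹ / γ - 1 / (γ - 1))
    = κ / δ * ((Q * R - γ * δ + γ - 1) / (γ * (γ - 1))
      + R * (3 * (1 - ν) / (1 + ν) * ((P - β * (δ / η) + β - 1) / (β * (β - 1)))
        - (Q - γ * (δ / η) + γ - 1) / (γ * (γ - 1)))) := by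
  field_simp
  ring
lemma wPoly_eq {κ ν γ β δ η : ℝ} (hν1 : (-1:ℝ) < ν) (hβ0 : β ≠ 0) (hβ1 : β ≠ 1)
    (hγ0 : γ ≠ 0) (hγ1 : γ ≠ 1) (hδ : 0 < δ) (hη : 0 < η) :
    wPoly κ ν γ β δ η
      = κ / δ * (Gf γ δ + η ^ γ * Hf (3 * (1 - ν) / (1 + ν)) β γ (δ / η)) := by
  have hν0 : (0:ℝ) < 1 + ν := by linarith
  have ht : 0 < δ / η := div_pos hδ hη
  have h1 : η ^ (γ - 1) = η ^ γ * η⁻¹ := by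
    rw [Real.rpow_sub hη, Real.rpow_one, div_eq_mul_inv]
  have h2 : (δ / η) ^ (β - 1) = (δ / η) ^ β * (η / δ) := by
    rw [Real.rpow_sub ht, Real.rpow_one, div_eq_mul_inv, inv_div]
  have h3 : δ ^ γ = (δ / η) ^ γ * η ^ γ := by
    rw [Real.div_rpow hδ.le hη.le, div_mul_cancel₀]
    exact (Real.rpow_pos_of_pos hη γ).ne'
  simp only [wPoly, Hf, Gf]
  rw [h1, h2, h3]
  generalize (δ / η) ^ β = P
  generalize (δ / η) ^ γ = Q
  generalize η ^ γ = R
  exact testid κ β γ ν δ η P Q R hβ0 (sub_ne_zero.2 hβ1) hγ0 (sub_ne_zero.2 hγ1)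
    hδ.ne' hη.ne' hν0.ne'
/-- `ŵ ≥ 0` for `η ≥ δ > 0` (weak non-negative stored energy condition), and `ŵ ≥ 0`
on all of `(0,∞)²` (strong condition) iff
`β ≥ min(γ, 3γ(1−ν)/(1+ν) − 2(1−2ν)/(1+ν))`. -/
theorem wPoly_nonneg (κ ν γ β : ℝ) (hκ : 0 < κ) (hν : ν ∈ Ioc (-1 : ℝ) (1/2))
    (hγ : 0 < γ) (hγ1 : γ ≠ 1) (hβ0 : β ≠ 0) (hβ1 : β ≠ 1)
    (hβν : β * (1 + ν) ≤ 3 * γ * (1 - ν)) :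
    (∀ δ η : ℝ, 0 < δ → δ ≤ η → 0 ≤ wPoly κ ν γ β δ η) ∧
    ((∀ δ η : ℝ, 0 < δ → 0 < η → 0 ≤ wPoly κ ν γ β δ η) ↔
      min γ (3 * γ * (1 - ν) / (1 + ν) - 2 * (1 - 2 * ν) / (1 + ν)) ≤ β) := by
  obtain ⟨hν1, hν2⟩ := hν
  have hν0 : (0:ℝ) < 1 + ν := by linarith
  set a : ℝ := 3 * (1 - ν) / (1 + ν) with ha_def
  have ha : 1 ≤ a := by
    rw [ha_def, le_div_iff₀ hν0]
    linarith
  have hγ0' : γ ≠ 0 := hγ.ne'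
  have hβa : β ≤ a * γ := by
    rw [ha_def, div_mul_eq_mul_div, le_div_iff₀ hν0]
    nlinarith [hβν]
  have hmin_eq : 3 * γ * (1 - ν) / (1 + ν) - 2 * (1 - 2 * ν) / (1 + ν) = a * (γ - 1) + 1 := by
    rw [ha_def]
    field_simp
    ring
  have hkey : ∀ δ η : ℝ, 0 < δ → 0 < η → 0 ≤ Hf a β γ (δ / η) → 0 ≤ wPoly κ ν γ β δ η := by
    intro δ η hδ hη hH
    rw [wPoly_eq hν1 hβ0 hβ1 hγ0' hγ1 hδ hη, ← ha_def]
    apply mul_nonneg (div_nonneg hκ.le hδ.le)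
    exact add_nonneg (Gf_nonneg hγ0' hγ1 hδ)
      (mul_nonneg (Real.rpow_pos_of_pos hη γ).le hH)
  refine ⟨?_, ?_, ?_⟩
  · intro δ η hδ hδη
    have hη : 0 < η := lt_of_lt_of_le hδ hδη
    exact hkey δ η hδ hη (Hf_nonneg_le_one ha hβ0 hβ1 hγ hγ1 hβa (div_pos hδ hη)
      ((div_le_one hη).2 hδη))
  · intro hstrong
    by_contra hcon
    push_neg at hcon
    rw [hmin_eq] at hcon
    obtain ⟨t, ht0, htneg⟩ := Hf_exists_neg ha hβ0 hβ1 hγ hγ1 hcon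
    have hti : (0:ℝ) < t⁻¹ := inv_pos.2 ht0
    have h1 := hstrong 1 t⁻¹ one_pos hti
    rw [wPoly_eq hν1 hβ0 hβ1 hγ0' hγ1 one_pos hti, ← ha_def,
      show (1:ℝ) / t⁻¹ = t by rw [one_div, inv_inv], Gf_one, zero_add, div_one] at h1
    have hpow : (0:ℝ) < t⁻¹ ^ γ := Real.rpow_pos_of_pos hti γ
    nlinarith [mul_pos hκ hpow]
  · intro hβmin δ η hδ hη
    apply hkey δ η hδ hη
    rw [hmin_eq] at hβmin
    rcases le_or_gt (δ / η) 1 with h | h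
    · exact Hf_nonneg_le_one ha hβ0 hβ1 hγ hγ1 hβa (div_pos hδ hη) h
    · exact Hf_nonneg_ge_one ha hβ0 hβ1 hγ hγ1 hβmin h.le
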